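/- Let X be a connected coarsely transitive graph. If there exists a bounded set B₀ of vertices such that the complement of B₀ has at least 3 unbounded connected components, then for every M > 0 there exists a bounded set B of vertices such that the complement of B has more than M unbounded connected components. Consequently, a coarsely transitive graph has either zero, one, two, or infinitely many ends. -/

import Mathlib

/-- `f` is an `(L,A)`-quasi-isometric embedding with respect to the
distance functions `dX` and `dY`. -/
def IsQIE {X Y : Type*} (dX : X → X → ℝ) (dY : Y → Y → ℝ) (L A : ℝ) (f : X → Y) : Prop :=
  ∀ a b : X, (1 / L) * dX a b - A ≤ dY (f a) (f b) ∧ dY (f a) (f b) ≤ L * dX a b + A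

/-- `f` is coarsely surjective with respect to the distance function `dY`. -/
def IsCoarselySurj {X Y : Type*} (dY : Y → Y → ℝ) (f : X → Y) : Prop :=
  ∃ C : ℝ, 0 ≤ C ∧ ∀ y : Y, ∃ x : X, dY y (f x) ≤ C

/-- `f` is an `(L,A)`-quasi-isometry. -/
def IsQI {X Y : Type*} (dX : X → X → ℝ) (dY : Y → Y → ℝ) (L A : ℝ) (f : X → Y) : Prop :=
  IsQIE dX dY L A f ∧ IsCoarselySurj dY f

/-- The shortest-path distance of a graph, as a real-valued distance function. -/
noncomputable def gdist {V : Type*} (G : SimpleGraph V) : V → V → ℝ := fun u v => (G.dist u v : ℝ)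

/-- A graph is coarsely transitive if there is `K ≥ 1` such that any vertex can be mapped
to any other vertex by a `(K,K)`-quasi-isometry (w.r.t. the shortest-path distance). -/
def CoarselyTransitive {V : Type*} (G : SimpleGraph V) : Prop :=
  ∃ K : ℝ, 1 ≤ K ∧ ∀ x y : V, ∃ f : V → V, IsQI (gdist G) (gdist G) K K f ∧ f x = y

/-- A set of vertices is bounded if it has finite diameter in the shortest-path metric. -/
def BddSet {V : Type*} (G : SimpleGraph V) (S : Set V) : Prop :=
  ∃ D : ℕ, ∀ u ∈ S, ∀ v ∈ S, G.dist u v ≤ D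

/-- The set of vertices of `X` belonging to the connected component `C` of the subgraph
induced on the complement of `S`. -/
def compVerts {V : Type*} (G : SimpleGraph V) (S : Set V)
    (C : (G.induce (Sᶜ : Set V)).ConnectedComponent) : Set V :=
  {v | ∃ h : v ∈ (Sᶜ : Set V), (G.induce (Sᶜ : Set V)).connectedComponentMk ⟨v, h⟩ = C}

/-- `U(X,S)`: the set of connected components of the subgraph induced on the complement of
`S` whose vertex sets are unbounded in the metric of `X`. -/
def unbddComps {V : Type*} (G : SimpleGraph V) (S : Set V) :
    Set ((G.induce (Sᶜ : Set V)).ConnectedComponent) :=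
  {C | ¬ BddSet G (compVerts G S C)}

/-- The closed ball of radius `r` about `x` in the shortest-path metric. -/
def gball {V : Type*} (G : SimpleGraph V) (x : V) (r : ℕ) : Set V :=
  {v | G.dist x v ≤ r}

namespace Stmt7Aux

open SimpleGraph

variable {V : Type*} {G : SimpleGraph V}

/-- Connected by a walk avoiding `S` (endpoints included). -/
def Avoid (G : SimpleGraph V) (S : Set V) (u v : V) : Prop :=
  ∃ p : G.Walk u v, ∀ x ∈ p.support, x ∉ S

/-- Vertex set of the component of `v` in the complement of `S`. -/
def CompOf (G : SimpleGraph V) (S : Set V) (v : V) : Set V := {u | Avoid G S u v}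

lemma Avoid.left_not_mem {S : Set V} {u v : V} (h : Avoid G S u v) : u ∉ S := by
  obtain ⟨p, hp⟩ := h; exact hp u p.start_mem_support

lemma Avoid.right_not_mem {S : Set V} {u v : V} (h : Avoid G S u v) : v ∉ S := by
  obtain ⟨p, hp⟩ := h; exact hp v p.end_mem_support

lemma avoid_refl {S : Set V} {v : V} (h : v ∉ S) : Avoid G S v v :=
  ⟨SimpleGraph.Walk.nil, by simp [h]⟩

lemma Avoid.symm' {S : Set V} {u v : V} (h : Avoid G S u v) : Avoid G S v u := by
  obtain ⟨p, hp⟩ := h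
  refine ⟨p.reverse, ?_⟩
  intro x hx
  rw [SimpleGraph.Walk.support_reverse] at hx
  exact hp x (List.mem_reverse.mp hx)

lemma Avoid.trans' {S : Set V} {u v w : V} (h : Avoid G S u v) (h' : Avoid G S v w) :
    Avoid G S u w := by
  obtain ⟨p, hp⟩ := h; obtain ⟨q, hq⟩ := h'
  refine ⟨p.append q, ?_⟩
  intro x hx
  rw [SimpleGraph.Walk.support_append, List.mem_append] at hx
  rcases hx with hx | hx
  · exact hp x hx
  · exact hq x (List.mem_of_mem_tail hx)

lemma Avoid.mono {S T : Set V} {u v : V} (hST : S ⊆ T) (h : Avoid G T u v) : Avoid G S u v := by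
  obtain ⟨p, hp⟩ := h
  exact ⟨p, fun x hx hxS => hp x hx (hST hxS)⟩

lemma avoid_adj {S : Set V} {u v : V} (h : G.Adj u v) (hu : u ∉ S) (hv : v ∉ S) :
    Avoid G S u v :=
  ⟨SimpleGraph.Walk.cons h SimpleGraph.Walk.nil, by
    intro x hx
    simp only [SimpleGraph.Walk.support_cons, SimpleGraph.Walk.support_nil, List.mem_cons,
      List.mem_singleton] at hx
    rcases hx with rfl | rfl | h'
    · exact hu
    · exact hv
    · exact absurd h' (by simp)⟩

lemma compOf_eq_of_mem {S : Set V} {u v : V} (h : u ∈ CompOf G S v) :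
    CompOf G S u = CompOf G S v := by
  ext x
  exact ⟨fun hx => hx.trans' h, fun hx => hx.trans' h.symm'⟩

lemma compOf_mono {S T : Set V} (hST : S ⊆ T) (v : V) : CompOf G T v ⊆ CompOf G S v :=
  fun _ h => h.mono hST

lemma avoid_of_mem_support {S : Set V} {u v x : V}
    (p : G.Walk u v) (hp : ∀ y ∈ p.support, y ∉ S) (hx : x ∈ p.support) : Avoid G S x v := by
  classical
  exact ⟨p.dropUntil x hx, fun y hy => hp y (SimpleGraph.Walk.support_dropUntil_subset p hx hy)⟩

lemma dist_le_of_mem_support {u v x : V} (p : G.Walk u v) (hx : x ∈ p.support) :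
    G.dist u x ≤ p.length := by
  classical
  exact le_trans (SimpleGraph.dist_le (p.takeUntil x hx)) (SimpleGraph.Walk.length_takeUntil_le p hx)

lemma avoid_of_dist_le (hc : G.Connected) {S : Set V} {u v : V} {ℓ : ℕ}
    (hd : G.dist u v ≤ ℓ) (hs : ∀ x, G.dist u x ≤ ℓ → x ∉ S) : Avoid G S u v := by
  obtain ⟨p, hp⟩ := (hc.preconnected u v).exists_walk_length_eq_dist
  exact ⟨p, fun x hx => hs x (le_trans (by simpa [hp] using dist_le_of_mem_support p hx) hd)⟩

lemma dist_le_one_of_adj {u v : V} (h : G.Adj u v) : G.dist u v ≤ 1 := by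
  simpa using SimpleGraph.dist_le (SimpleGraph.Walk.cons h SimpleGraph.Walk.nil)

/-- transport of avoidance along a coarse map -/
lemma avoid_transport (hc : G.Connected) {Q S : Set V} {u v : V} (h : V → V) (γ : ℕ)
    (Hgap : ∀ a b, G.Adj a b → G.dist (h a) (h b) ≤ γ)
    (Hsh : ∀ a, a ∉ Q → ∀ x, G.dist (h a) x ≤ γ → x ∉ S)
    (hav : Avoid G Q u v) : Avoid G S (h u) (h v) := by
  obtain ⟨p, hp⟩ := hav
  induction p with
  | nil =>
    refine avoid_refl (Hsh _ (hp _ (SimpleGraph.Walk.start_mem_support _)) _ ?_)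
    simp [SimpleGraph.dist_self]
  | @cons a b w hadj p ih =>
    have ha : a ∉ Q := hp a (by simp)
    have hrest : ∀ x ∈ p.support, x ∉ Q := fun x hx => hp x (by simp [hx])
    have h1 : Avoid G S (h a) (h b) :=
      avoid_of_dist_le hc (Hgap a b hadj) (Hsh a ha)
    exact h1.trans' (ih hrest)

lemma bdd_iff (hc : G.Connected) (x₀ : V) {S : Set V} :
    BddSet G S ↔ ∃ r : ℕ, ∀ u ∈ S, G.dist x₀ u ≤ r := by
  constructor
  · rintro ⟨D, hD⟩
    by_cases hS : S = ∅
    · exact ⟨0, by simp [hS]⟩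
    · obtain ⟨s₀, hs₀⟩ := Set.nonempty_iff_ne_empty.mpr hS
      refine ⟨G.dist x₀ s₀ + D, fun u hu => ?_⟩
      calc G.dist x₀ u ≤ G.dist x₀ s₀ + G.dist s₀ u := hc.dist_triangle
        _ ≤ G.dist x₀ s₀ + D := by gcongr; exact hD s₀ hs₀ u hu
  · rintro ⟨r, hr⟩
    refine ⟨r + r, fun u hu v hv => ?_⟩
    calc G.dist u v ≤ G.dist u x₀ + G.dist x₀ v := hc.dist_triangle
      _ ≤ r + r := by
          have h1 := hr u hu
          have h2 := hr v hv
          rw [SimpleGraph.dist_comm] at h1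
          omega

lemma unbdd_far (hc : G.Connected) (x₀ : V) {S : Set V} (h : ¬ BddSet G S) (r : ℕ) :
    ∃ u ∈ S, r < G.dist x₀ u := by
  by_contra hcon
  push_neg at hcon
  exact h ((bdd_iff hc x₀).mpr ⟨r, hcon⟩)

lemma bdd_subset {S T : Set V} (h : BddSet G T) (hST : S ⊆ T) : BddSet G S := by
  obtain ⟨D, hD⟩ := h
  exact ⟨D, fun u hu v hv => hD u (hST hu) v (hST hv)⟩

lemma not_mem_of_unbdd_compOf {S : Set V} {v : V} (h : ¬ BddSet G (CompOf G S v)) : v ∉ S := by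
  intro hv
  refine h ?_
  have : CompOf G S v = ∅ := by
    ext u
    simp only [Set.mem_empty_iff_false, iff_false]
    intro hu
    exact hu.right_not_mem hv
  rw [this]
  exact ⟨0, by simp⟩

/-- walks in the induced graph on `Sᶜ` give avoiding walks -/
lemma avoid_of_walk {S : Set V} {u v : ↥(Sᶜ : Set V)}
    (p : (G.induce (Sᶜ : Set V)).Walk u v) : Avoid G S u.1 v.1 := by
  induction p with
  | @nil a =>
    refine ⟨SimpleGraph.Walk.nil, ?_⟩
    intro x hx
    simp only [SimpleGraph.Walk.support_nil, List.mem_singleton] at hx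
    subst hx
    exact a.2
  | @cons a b w hadj p ih =>
    obtain ⟨q, hq⟩ := ih
    have hadj' : G.Adj a.1 b.1 := hadj
    refine ⟨SimpleGraph.Walk.cons hadj' q, ?_⟩
    intro x hx
    rw [SimpleGraph.Walk.support_cons, List.mem_cons] at hx
    rcases hx with rfl | hx
    · exact a.2
    · exact hq x hx

lemma avoid_of_reachable {S : Set V} {u v : ↥(Sᶜ : Set V)}
    (h : (G.induce (Sᶜ : Set V)).Reachable u v) : Avoid G S u.1 v.1 := by
  obtain ⟨p⟩ := h
  exact avoid_of_walk p

lemma reachable_of_avoid {S : Set V} {u v : V} (h : Avoid G S u v) :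
    ∀ (hu : u ∈ (Sᶜ : Set V)) (hv : v ∈ (Sᶜ : Set V)),
      (G.induce (Sᶜ : Set V)).Reachable ⟨u, hu⟩ ⟨v, hv⟩ := by
  obtain ⟨p, hp⟩ := h
  induction p with
  | nil => intro hu hv; rfl
  | @cons a b w hadj p ih =>
    intro hu hv
    have hb : b ∈ (Sᶜ : Set V) := hp b (by simp)
    have hrest : ∀ x ∈ p.support, x ∉ S := fun x hx => hp x (by simp [hx])
    have hadj' : (G.induce (Sᶜ : Set V)).Adj ⟨a, hu⟩ ⟨b, hb⟩ := hadj
    exact (hadj'.reachable).trans (ih hrest hb hv)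

lemma compVerts_eq {S : Set V} {v : V} (hv : v ∈ (Sᶜ : Set V)) :
    compVerts G S ((G.induce (Sᶜ : Set V)).connectedComponentMk ⟨v, hv⟩) = CompOf G S v := by
  ext u
  constructor
  · rintro ⟨hu, hC⟩
    exact avoid_of_reachable (SimpleGraph.ConnectedComponent.eq.mp hC)
  · intro h
    have hu : u ∈ (Sᶜ : Set V) := by
      obtain ⟨p, hp⟩ := h
      exact hp u p.start_mem_support
    exact ⟨hu, SimpleGraph.ConnectedComponent.eq.mpr (reachable_of_avoid h hu hv)⟩

/-- Hub lemma: everything outside the component of `y₀` can reach `xB` avoiding `Q`. -/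
lemma hub (hc : G.Connected) {S Q : Set V} {xB y₀ : V} {σ ρ : ℕ}
    (hS : ∀ u ∈ S, G.dist xB u ≤ σ) (hQ : ∀ u ∈ Q, G.dist y₀ u ≤ ρ)
    (hgap : ρ + 2*σ + 1 < G.dist xB y₀)
    (hball : ∀ x, G.dist y₀ x ≤ ρ → x ∈ CompOf G S y₀) :
    ∀ u, u ∉ CompOf G S y₀ → Avoid G Q u xB := by
  have hQcomp : ∀ x ∈ Q, x ∈ CompOf G S y₀ := fun x hx => hball x (hQ x hx)
  have hdy : G.dist y₀ xB ≤ ρ → False := by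
    intro h
    rw [SimpleGraph.dist_comm] at h
    omega
  intro u hu
  generalize hn : G.dist u xB = n
  induction n using Nat.strong_induction_on generalizing u with
  | _ n ih =>
    by_cases haS : u ∈ S
    · refine avoid_of_dist_le hc (ℓ := σ) (by rw [SimpleGraph.dist_comm]; exact hS u haS) ?_
      intro x hx hxQ
      have h1 : G.dist y₀ x ≤ ρ := hQ x hxQ
      have h2 : G.dist xB y₀ ≤ G.dist xB u + G.dist u y₀ := hc.dist_triangle
      have h3 : G.dist u y₀ ≤ G.dist u x + G.dist x y₀ := hc.dist_triangle
      have h4 : G.dist xB u ≤ σ := hS u haS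
      rw [SimpleGraph.dist_comm] at h1
      omega
    · by_cases heq : u = xB
      · subst heq
        exact avoid_refl (fun hmem => hdy (hQ _ hmem))
      · obtain ⟨p, hp⟩ := (hc.preconnected u xB).exists_walk_length_eq_dist
        cases p with
        | nil => exact absurd rfl heq
        | @cons _ b _ hadj q =>
          have hlq : q.length = G.dist u xB - 1 := by
            have := hp
            simp only [SimpleGraph.Walk.length_cons] at this
            omega
          have hd0 : 0 < G.dist u xB := by
            rcases Nat.eq_zero_or_pos (G.dist u xB) with h0 | h0
            · exact absurd ((hc.dist_eq_zero_iff).mp h0) heq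
            · exact h0
          have hdb : G.dist b xB < n := by
            have := SimpleGraph.dist_le q
            omega
          have hbC : b ∉ CompOf G S y₀ := by
            intro hbmem
            have hbS : b ∉ S := hbmem.left_not_mem
            exact hu ((avoid_adj hadj haS hbS).trans' hbmem)
          have haQ : u ∉ Q := fun hq => hu (hQcomp u hq)
          have hbQ : b ∉ Q := fun hq => hbC (hQcomp b hq)
          exact (avoid_adj hadj haQ hbQ).trans' (ih _ hdb b hbC rfl)

lemma ct_package (hct : CoarselyTransitive G) :
    ∃ κ : ℕ, 1 ≤ κ ∧ ∀ x y : V, ∃ (f : V → V) (c : ℕ), f x = y ∧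
      (∀ a b, G.dist (f a) (f b) ≤ κ * G.dist a b + κ) ∧
      (∀ a b, G.dist a b ≤ κ * G.dist (f a) (f b) + κ * κ) ∧
      (∀ v, ∃ w, G.dist v (f w) ≤ c) := by
  obtain ⟨K, hK1, hK⟩ := hct
  have hK0 : (0:ℝ) < K := lt_of_lt_of_le one_pos hK1
  refine ⟨⌈K⌉₊, Nat.one_le_ceil_iff.mpr hK0, fun x y => ?_⟩
  obtain ⟨f, ⟨hQIE, ⟨C, hC0, hCs⟩⟩, hfx⟩ := hK x y
  have hKκ : K ≤ (⌈K⌉₊ : ℝ) := Nat.le_ceil K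
  simp only [IsQIE, gdist] at hQIE
  simp only [gdist] at hCs
  refine ⟨f, ⌈C⌉₊, hfx, ?_, ?_, ?_⟩
  · intro a b
    have h := (hQIE a b).2
    have h3 : (G.dist (f a) (f b) : ℝ) ≤ (⌈K⌉₊:ℝ) * (G.dist a b) + ⌈K⌉₊ := by
      have d0 : (0:ℝ) ≤ (G.dist a b : ℝ) := Nat.cast_nonneg _
      nlinarith
    exact_mod_cast h3
  · intro a b
    have h := (hQIE a b).1
    have h2 : (G.dist a b : ℝ) ≤ K * (G.dist (f a) (f b)) + K * K := by
      have hKK : 1 / K * (G.dist a b : ℝ) ≤ (G.dist (f a) (f b) : ℝ) + K := by linarith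
      have := mul_le_mul_of_nonneg_left hKK (le_of_lt hK0)
      have hcalc : K * (1 / K * (G.dist a b : ℝ)) = (G.dist a b : ℝ) := by
        field_simp
      rw [hcalc] at this
      nlinarith
    have h3 : (G.dist a b : ℝ) ≤ (⌈K⌉₊:ℝ) * (G.dist (f a) (f b)) + (⌈K⌉₊:ℝ) * ⌈K⌉₊ := by
      have d0 : (0:ℝ) ≤ (G.dist (f a) (f b) : ℝ) := Nat.cast_nonneg _
      have hK0' : (0:ℝ) ≤ K := le_of_lt hK0
      nlinarith
    exact_mod_cast h3
  · intro v
    obtain ⟨w, hw⟩ := hCs v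
    refine ⟨w, ?_⟩
    have : (G.dist v (f w) : ℝ) ≤ (⌈C⌉₊ : ℝ) := le_trans hw (Nat.le_ceil C)
    exact_mod_cast this


section Beta

/-- Lemma β (no full death): every one of the three unbounded components keeps an unbounded
component of the complement of every ball around `x₀`. -/
lemma beta (hc : G.Connected) {κ : ℕ}
    (hctp : ∀ x y : V, ∃ (f : V → V) (c : ℕ), f x = y ∧
      (∀ a b, G.dist (f a) (f b) ≤ κ * G.dist a b + κ) ∧
      (∀ a b, G.dist a b ≤ κ * G.dist (f a) (f b) + κ * κ) ∧
      (∀ v, ∃ w, G.dist v (f w) ≤ c))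
    {B₀ : Set V} {x₀ : V} {s : ℕ} (hB₀s : ∀ u ∈ B₀, G.dist x₀ u ≤ s)
    {v3 : Fin 3 → V} (hv3u : ∀ i, ¬ BddSet G (CompOf G B₀ (v3 i)))
    (hv3d : ∀ i j : Fin 3, i ≠ j → ¬ Avoid G B₀ (v3 i) (v3 j))
    (b : ℕ) (hb : s ≤ b) (i : Fin 3) :
    ∃ u, Avoid G B₀ u (v3 i) ∧ ¬ BddSet G (CompOf G (gball G x₀ b) u) := by
  by_contra hdeath
  push_neg at hdeath
  -- constants
  set m : ℕ := s + 2*κ + 1 with hm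
  set ρ : ℕ := κ * m + κ * κ with hρ
  -- a deep point in C_i with bounded local component
  obtain ⟨z, hzC, hzd⟩ := unbdd_far hc x₀ (hv3u i) (ρ + 2*b + 2)
  have hzball : z ∉ gball G x₀ b := by
    simp only [gball, Set.mem_setOf_eq]
    omega
  have hzP : z ∈ CompOf G (gball G x₀ b) z := avoid_refl hzball
  have hPbdd : BddSet G (CompOf G (gball G x₀ b) z) := hdeath z hzC
  obtain ⟨Λ, hΛ⟩ := (bdd_iff hc z).mp hPbdd
  -- the quasi-isometry sending z to x₀
  obtain ⟨h, c, hhz, hup, hlow, hsurj⟩ := hctp z x₀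
  set Q : Set V := {w | G.dist x₀ (h w) ≤ m} with hQdef
  have hQball : ∀ w ∈ Q, G.dist z w ≤ ρ := by
    intro w hw
    have h1 : G.dist z w ≤ κ * G.dist (h z) (h w) + κ * κ := hlow z w
    rw [hhz] at h1
    have h2 : G.dist x₀ (h w) ≤ m := hw
    calc G.dist z w ≤ κ * G.dist x₀ (h w) + κ * κ := h1
      _ ≤ κ * m + κ * κ := by gcongr
      _ = ρ := rfl
  have hballP : ∀ x, G.dist z x ≤ ρ → x ∈ CompOf G (gball G x₀ b) z := by
    intro x hx
    refine Avoid.symm' (avoid_of_dist_le hc (ℓ := ρ) hx ?_)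
    intro q hq hqball
    have : G.dist x₀ q ≤ b := hqball
    have h2 : G.dist x₀ z ≤ G.dist x₀ q + G.dist q z := hc.dist_triangle
    have h4 : G.dist q z = G.dist z q := SimpleGraph.dist_comm
    omega
  -- far witnesses in two distinct components
  set T : ℕ := m + c + (κ * Λ + κ) + s + 1 with hT
  obtain ⟨c₀, hc₀C, hc₀d⟩ := unbdd_far hc x₀ (hv3u 0) T
  obtain ⟨c₁, hc₁C, hc₁d⟩ := unbdd_far hc x₀ (hv3u 1) T
  obtain ⟨w₀, hw₀⟩ := hsurj c₀
  obtain ⟨w₁, hw₁⟩ := hsurj c₁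
  -- the lifts are outside P and outside Q
  have key : ∀ (cj wj : V), T < G.dist x₀ cj → G.dist cj (h wj) ≤ c →
      (wj ∉ CompOf G (gball G x₀ b) z ∧ wj ∉ Q) := by
    intro cj wj hcjd hwj
    have hfar : T - c ≤ G.dist x₀ (h wj) := by
      have h2 : G.dist x₀ cj ≤ G.dist x₀ (h wj) + G.dist (h wj) cj := hc.dist_triangle
      have h4 : G.dist (h wj) cj = G.dist cj (h wj) := SimpleGraph.dist_comm
      omega
    constructor
    · intro hmem
      have h1 : G.dist z wj ≤ Λ := hΛ wj hmem
      have h2 : G.dist (h z) (h wj) ≤ κ * G.dist z wj + κ := hup z wj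
      rw [hhz] at h2
      have h3 : G.dist x₀ (h wj) ≤ κ * Λ + κ := by
        calc G.dist x₀ (h wj) ≤ κ * G.dist z wj + κ := h2
          _ ≤ κ * Λ + κ := by gcongr
      omega
    · intro hmem
      have : G.dist x₀ (h wj) ≤ m := hmem
      omega
  have hkey₀ := key c₀ w₀ hc₀d hw₀
  have hkey₁ := key c₁ w₁ hc₁d hw₁
  -- hub: both lifts connect to x₀ avoiding Q
  have hhub := hub hc (S := gball G x₀ b) (Q := Q) (xB := x₀) (y₀ := z) (σ := b) (ρ := ρ)
    (fun u hu => hu) hQball (by omega) hballP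
  have hav : Avoid G Q w₀ w₁ :=
    (hhub w₀ hkey₀.1).trans' (Avoid.symm' (hhub w₁ hkey₁.1))
  -- transport down to near x₀
  have htrans : Avoid G (gball G x₀ s) (h w₀) (h w₁) := by
    refine avoid_transport hc h (2*κ) ?_ ?_ hav
    · intro a b' hadj
      have h1 : G.dist (h a) (h b') ≤ κ * G.dist a b' + κ := hup a b'
      have h2 : G.dist a b' ≤ 1 := dist_le_one_of_adj hadj
      have : κ * G.dist a b' ≤ κ * 1 := by gcongr
      omega
    · intro a ha x hx hxball
      have h1 : m < G.dist x₀ (h a) := by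
        by_contra hcon
        push_neg at hcon
        exact ha hcon
      have h2 : G.dist x₀ x ≤ s := hxball
      have h3 : G.dist x₀ (h a) ≤ G.dist x₀ x + G.dist x (h a) := hc.dist_triangle
      have h4 : G.dist x (h a) = G.dist (h a) x := SimpleGraph.dist_comm
      omega
  -- endpoint legs
  have hleg : ∀ (cj wj : V), T < G.dist x₀ cj → G.dist cj (h wj) ≤ c →
      Avoid G (gball G x₀ s) cj (h wj) := by
    intro cj wj hcjd hwj
    refine avoid_of_dist_le hc (ℓ := c) hwj ?_
    intro x hx hxball
    have h2 : G.dist x₀ x ≤ s := hxball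
    have h3 : G.dist x₀ cj ≤ G.dist x₀ x + G.dist x cj := hc.dist_triangle
    have h4 : G.dist x cj = G.dist cj x := SimpleGraph.dist_comm
    omega
  have hfinal : Avoid G (gball G x₀ s) c₀ c₁ :=
    ((hleg c₀ w₀ hc₀d hw₀).trans' htrans).trans' (Avoid.symm' (hleg c₁ w₁ hc₁d hw₁))
  have hB₀sub : B₀ ⊆ gball G x₀ s := fun u hu => hB₀s u hu
  have hfinal' : Avoid G B₀ c₀ c₁ := hfinal.mono hB₀sub
  exact hv3d 0 1 (by decide)
    ((Avoid.symm' hc₀C).trans' (hfinal'.trans' hc₁C))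

/-- Transport lemma: around every vertex `y` there is a bounded set `Q` within uniform radius
whose complement has at least three unbounded components. -/
lemma tl (hc : G.Connected) {κ : ℕ} (hκ : 1 ≤ κ)
    (hctp : ∀ x y : V, ∃ (f : V → V) (c : ℕ), f x = y ∧
      (∀ a b, G.dist (f a) (f b) ≤ κ * G.dist a b + κ) ∧
      (∀ a b, G.dist a b ≤ κ * G.dist (f a) (f b) + κ * κ) ∧
      (∀ v, ∃ w, G.dist v (f w) ≤ c))
    {B₀ : Set V} {x₀ : V} {s : ℕ} (hB₀s : ∀ u ∈ B₀, G.dist x₀ u ≤ s)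
    {v3 : Fin 3 → V} (hv3u : ∀ i, ¬ BddSet G (CompOf G B₀ (v3 i)))
    (hv3d : ∀ i j : Fin 3, i ≠ j → ¬ Avoid G B₀ (v3 i) (v3 j))
    (y : V) :
    ∃ Q : Set V, ∃ t : Fin 3 → V,
      (∀ w ∈ Q, G.dist y w ≤ κ * (s + 2*κ + 1) + κ * κ) ∧
      (∀ i, t i ∈ CompOf G Q (t i)) ∧
      (∀ i, ¬ BddSet G (CompOf G Q (t i))) ∧
      (∀ i j : Fin 3, i ≠ j → ¬ Avoid G Q (t i) (t j)) := by
  obtain ⟨h, c, hhy, hup, hlow, hsurj⟩ := hctp y x₀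
  set m : ℕ := s + 2*κ + 1 with hm
  set Lc : ℕ := κ * (2*c + 1) + κ * κ with hLc
  set b : ℕ := m + c + κ * Lc + κ + 1 with hb
  -- the three unbounded components at scale b
  have hbeta := fun i => beta hc hctp hB₀s hv3u hv3d b (by omega) i
  choose u hu hFu using hbeta
  -- the lift function
  choose lft hlft using hsurj
  set Q : Set V := {w | G.dist x₀ (h w) ≤ m} with hQdef
  refine ⟨Q, fun i => lft (u i), ?_, ?_, ?_, ?_⟩
  · -- Q is within uniform radius of y
    intro w hw
    have h1 : G.dist y w ≤ κ * G.dist (h y) (h w) + κ * κ := hlow y w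
    rw [hhy] at h1
    have h2 : G.dist x₀ (h w) ≤ m := hw
    calc G.dist y w ≤ κ * G.dist x₀ (h w) + κ * κ := h1
      _ ≤ κ * m + κ * κ := by gcongr
  · -- each t i avoids Q
    intro i
    refine avoid_refl ?_
    intro hmem
    have h1 : G.dist x₀ (h (lft (u i))) ≤ m := hmem
    have h2 : G.dist (u i) (h (lft (u i))) ≤ c := hlft (u i)
    have h3 : G.dist x₀ (u i) ≤ G.dist x₀ (h (lft (u i))) + G.dist (h (lft (u i))) (u i) :=
      hc.dist_triangle
    have h4 : G.dist (h (lft (u i))) (u i) = G.dist (u i) (h (lft (u i))) := SimpleGraph.dist_comm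
    have h5 : b < G.dist x₀ (u i) := by
      have := not_mem_of_unbdd_compOf (hFu i)
      simp only [gball, Set.mem_setOf_eq, not_le] at this
      exact this
    omega
  · -- unboundedness
    intro i hbdd
    obtain ⟨r, hr⟩ := (bdd_iff hc y).mp hbdd
    -- a very far member of F i
    obtain ⟨w, hwF, hwd⟩ := unbdd_far hc x₀ (hFu i) (κ * r + c + κ + b)
    -- sameness: lft w belongs to the component of lft (u i)
    have hsame : Avoid G Q (lft w) (lft (u i)) := by
      refine avoid_transport hc lft Lc ?_ ?_ hwF
      · intro a b' hadj
        have h1 : G.dist a b' ≤ 1 := dist_le_one_of_adj hadj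
        have h2 : G.dist (lft a) (lft b') ≤ κ * G.dist (h (lft a)) (h (lft b')) + κ * κ :=
          hlow _ _
        have h3 : G.dist (h (lft a)) (h (lft b')) ≤
            G.dist (h (lft a)) a + (G.dist a b' + G.dist b' (h (lft b'))) := by
          calc G.dist (h (lft a)) (h (lft b')) ≤
              G.dist (h (lft a)) a + G.dist a (h (lft b')) := hc.dist_triangle
            _ ≤ G.dist (h (lft a)) a + (G.dist a b' + G.dist b' (h (lft b'))) := by
                gcongr
                exact hc.dist_triangle
        have h4 : G.dist (h (lft a)) a = G.dist a (h (lft a)) := SimpleGraph.dist_comm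
        have h5 := hlft a
        have h6 := hlft b'
        have h7 : G.dist (h (lft a)) (h (lft b')) ≤ 2*c + 1 := by omega
        calc G.dist (lft a) (lft b') ≤ κ * G.dist (h (lft a)) (h (lft b')) + κ * κ := h2
          _ ≤ κ * (2*c + 1) + κ * κ := by gcongr
          _ = Lc := rfl
      · intro a ha x hx hxQ
        have h1 : G.dist x₀ (h x) ≤ m := hxQ
        have h2 : G.dist (h (lft a)) (h x) ≤ κ * G.dist (lft a) x + κ := hup _ _
        have h3 : G.dist x₀ a ≤
            G.dist x₀ (h x) + (G.dist (h x) (h (lft a)) + (G.dist (h (lft a)) a)) := by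
          calc G.dist x₀ a ≤ G.dist x₀ (h (lft a)) + G.dist (h (lft a)) a := hc.dist_triangle
            _ ≤ (G.dist x₀ (h x) + G.dist (h x) (h (lft a))) + G.dist (h (lft a)) a := by
                gcongr
                exact hc.dist_triangle
            _ = _ := by omega
        have h4 : G.dist (h x) (h (lft a)) = G.dist (h (lft a)) (h x) := SimpleGraph.dist_comm
        have h5 : G.dist (h (lft a)) a = G.dist a (h (lft a)) := SimpleGraph.dist_comm
        have h6 := hlft a
        have h7 : κ * G.dist (lft a) x ≤ κ * Lc := by gcongr
        have h8 : b < G.dist x₀ a := by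
          have : a ∉ gball G x₀ b := ha
          simp only [gball, Set.mem_setOf_eq, not_le] at this
          exact this
        omega
    have hmem : lft w ∈ CompOf G Q (lft (u i)) := hsame
    have h1 := hr (lft w) hmem
    -- but lft w is far from y
    have h2 : G.dist x₀ (h (lft w)) + c ≥ G.dist x₀ w := by
      have h3 : G.dist x₀ w ≤ G.dist x₀ (h (lft w)) + G.dist (h (lft w)) w := hc.dist_triangle
      have h4 : G.dist (h (lft w)) w = G.dist w (h (lft w)) := SimpleGraph.dist_comm
      have h5 := hlft w
      omega
    have h3 : G.dist (h y) (h (lft w)) ≤ κ * G.dist y (lft w) + κ := hup _ _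
    rw [hhy] at h3
    have h6 : κ * G.dist y (lft w) ≤ κ * r := by gcongr
    omega
  · -- separation
    intro i j hij hav
    have htrans : Avoid G (gball G x₀ s) (h (lft (u i))) (h (lft (u j))) := by
      refine avoid_transport hc h (2*κ) ?_ ?_ hav
      · intro a b' hadj
        have h1 : G.dist (h a) (h b') ≤ κ * G.dist a b' + κ := hup a b'
        have h2 : G.dist a b' ≤ 1 := dist_le_one_of_adj hadj
        have h3 : κ * G.dist a b' ≤ κ * 1 := by gcongr
        omega
      · intro a ha x hx hxball
        have h1 : m < G.dist x₀ (h a) := by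
          by_contra hcon
          push_neg at hcon
          exact ha hcon
        have h2 : G.dist x₀ x ≤ s := hxball
        have h3 : G.dist x₀ (h a) ≤ G.dist x₀ x + G.dist x (h a) := hc.dist_triangle
        have h4 : G.dist x (h a) = G.dist (h a) x := SimpleGraph.dist_comm
        omega
    have hfar : ∀ k : Fin 3, b < G.dist x₀ (u k) := by
      intro k
      have := not_mem_of_unbdd_compOf (hFu k)
      simp only [gball, Set.mem_setOf_eq, not_le] at this
      exact this
    have hleg : ∀ k : Fin 3, Avoid G (gball G x₀ s) (u k) (h (lft (u k))) := by
      intro k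
      refine avoid_of_dist_le hc (ℓ := c) (hlft (u k)) ?_
      intro x hx hxball
      have h2 : G.dist x₀ x ≤ s := hxball
      have h3 : G.dist x₀ (u k) ≤ G.dist x₀ x + G.dist x (u k) := hc.dist_triangle
      have h4 : G.dist x (u k) = G.dist (u k) x := SimpleGraph.dist_comm
      have h5 := hfar k
      omega
    have hfinal : Avoid G (gball G x₀ s) (u i) (u j) :=
      ((hleg i).trans' htrans).trans' (Avoid.symm' (hleg j))
    have hB₀sub : B₀ ⊆ gball G x₀ s := fun q hq => hB₀s q hq
    have hfinal' : Avoid G B₀ (u i) (u j) := hfinal.mono hB₀sub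
    -- u i is in component of v3 i
    have hui : Avoid G B₀ (u i) (v3 i) := hu i
    have huj : Avoid G B₀ (u j) (v3 j) := hu j
    exact hv3d i j hij ((Avoid.symm' hui).trans' (hfinal'.trans' huj))

/-- Splitting step: a bounded set with `k+1` distinct unbounded complementary components can be
enlarged to one with `k+2` of them. -/
lemma step (hc : G.Connected) {κ : ℕ} (hκ : 1 ≤ κ)
    (hctp : ∀ x y : V, ∃ (f : V → V) (c : ℕ), f x = y ∧
      (∀ a b, G.dist (f a) (f b) ≤ κ * G.dist a b + κ) ∧
      (∀ a b, G.dist a b ≤ κ * G.dist (f a) (f b) + κ * κ) ∧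
      (∀ v, ∃ w, G.dist v (f w) ≤ c))
    {B₀ : Set V} {x₀ : V} {s : ℕ} (hB₀s : ∀ u ∈ B₀, G.dist x₀ u ≤ s)
    {v3 : Fin 3 → V} (hv3u : ∀ i, ¬ BddSet G (CompOf G B₀ (v3 i)))
    (hv3d : ∀ i j : Fin 3, i ≠ j → ¬ Avoid G B₀ (v3 i) (v3 j))
    {k : ℕ} {B : Set V} (hB : BddSet G B) {w : Fin (k+1) → V}
    (hwu : ∀ i, ¬ BddSet G (CompOf G B (w i)))
    (hwd : ∀ i j : Fin (k+1), i ≠ j → ¬ Avoid G B (w i) (w j)) :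
    ∃ B' : Set V, BddSet G B' ∧ ∃ w' : Fin (k+2) → V,
      (∀ i, ¬ BddSet G (CompOf G B' (w' i))) ∧
      (∀ i j : Fin (k+2), i ≠ j → ¬ Avoid G B' (w' i) (w' j)) := by
  classical
  set ρT : ℕ := κ * (s + 2*κ + 1) + κ * κ with hρT
  obtain ⟨σ, hσ⟩ := (bdd_iff hc x₀).mp hB
  -- a deep point in the first component
  obtain ⟨y, hyC, hyd⟩ := unbdd_far hc x₀ (hwu 0) (ρT + 2*σ + 1)
  obtain ⟨Q, t, hQy, htQ, htu, htd⟩ := tl hc hκ hctp hB₀s hv3u hv3d y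
  set D₁ : Set V := CompOf G B y with hD₁
  have hyB : y ∉ B := hyC.left_not_mem
  have hyD : y ∈ D₁ := avoid_refl hyB
  -- the ball around y is inside D₁
  have hballD : ∀ x, G.dist y x ≤ ρT → x ∈ D₁ := by
    intro x hx
    refine Avoid.symm' (avoid_of_dist_le hc (ℓ := ρT) hx ?_)
    intro q hq hqB
    have h1 : G.dist x₀ q ≤ σ := hσ q hqB
    have h2 : G.dist x₀ y ≤ G.dist x₀ q + G.dist q y := hc.dist_triangle
    have h3 : G.dist q y = G.dist y q := SimpleGraph.dist_comm
    omega
  -- hub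
  have hhub : ∀ u, u ∉ D₁ → Avoid G Q u x₀ :=
    hub hc (S := B) (Q := Q) (xB := x₀) (y₀ := y) (σ := σ) (ρ := ρT) hσ hQy (by omega) hballD
  have hQD : ∀ q ∈ Q, q ∈ D₁ := fun q hq => hballD q (hQy q hq)
  -- at most one of the three components of Q meets x₀'s side
  set P : Fin 3 → Prop := fun i => Avoid G Q (t i) x₀ with hP
  have hex : ∃ i₁ i₂ : Fin 3, i₁ ≠ i₂ ∧ ¬ P i₁ ∧ ¬ P i₂ := by
    have hPone : ∀ i j : Fin 3, i ≠ j → P i → P j → False := by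
      intro i j hij hi hj
      exact htd i j hij (hi.trans' (Avoid.symm' hj))
    by_cases h0 : P 0
    · exact ⟨1, 2, by decide, fun h1 => hPone 0 1 (by decide) h0 h1,
        fun h2 => hPone 0 2 (by decide) h0 h2⟩
    · by_cases h1 : P 1
      · exact ⟨0, 2, by decide, h0, fun h2 => hPone 1 2 (by decide) h1 h2⟩
      · exact ⟨0, 1, by decide, h0, h1⟩
  obtain ⟨i₁, i₂, hi12, hPi₁, hPi₂⟩ := hex
  -- facts about members of the two new components
  have hkey : ∀ (ℓ : Fin 3), ¬ P ℓ → ∀ x, x ∈ CompOf G Q (t ℓ) → x ∈ D₁ ∧ x ∉ B ∧ x ∉ Q := by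
    intro ℓ hPℓ x hx
    have hxQ : x ∉ Q := hx.left_not_mem
    have hxD : x ∈ D₁ := by
      by_contra hxD
      exact hPℓ ((Avoid.symm' hx).trans' (hhub x hxD))
    exact ⟨hxD, hxD.left_not_mem, hxQ⟩
  -- the new bounded set
  set B' : Set V := B ∪ Q with hB'
  have hB'bdd : BddSet G B' := by
    refine (bdd_iff hc x₀).mpr ⟨σ + (G.dist x₀ y + ρT), ?_⟩
    rintro q (hq | hq)
    · have := hσ q hq; omega
    · have h1 : G.dist y q ≤ ρT := hQy q hq
      have h2 : G.dist x₀ q ≤ G.dist x₀ y + G.dist y q := hc.dist_triangle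
      omega
  -- new components stay unbounded
  have hnew : ∀ (ℓ : Fin 3), ¬ P ℓ → CompOf G Q (t ℓ) ⊆ CompOf G B' (t ℓ) := by
    intro ℓ hPℓ x hx
    obtain ⟨p, hp⟩ := hx
    refine ⟨p, fun q hq => ?_⟩
    have hqmem : q ∈ CompOf G Q (t ℓ) := avoid_of_mem_support p hp hq
    have := hkey ℓ hPℓ q hqmem
    rintro (hqB | hqQ)
    · exact this.2.1 hqB
    · exact this.2.2 hqQ
  -- old components stay unbounded
  have hold : ∀ j : Fin (k+1), j ≠ 0 → CompOf G B (w j) ⊆ CompOf G B' (w j) := by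
    intro j hj x hx
    obtain ⟨p, hp⟩ := hx
    refine ⟨p, fun q hq => ?_⟩
    have hqmem : q ∈ CompOf G B (w j) := avoid_of_mem_support p hp hq
    have hqD : q ∉ D₁ := by
      intro hqD
      exact hwd 0 j (Ne.symm hj)
        ((Avoid.symm' hyC).trans' ((Avoid.symm' hqD).trans' hqmem))
    rintro (hqB | hqQ)
    · exact hqmem.left_not_mem hqB
    · exact hqD (hQD q hqQ)
  -- t ℓ is in D₁
  have htD : ∀ (ℓ : Fin 3), ¬ P ℓ → t ℓ ∈ D₁ := fun ℓ hPℓ => (hkey ℓ hPℓ (t ℓ) (htQ ℓ)).1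
  -- the new witness family
  set w' : Fin (k+2) → V := fun i =>
    if i.val = 0 then t i₁ else if i.val = 1 then t i₂
    else w ⟨i.val - 1, by have := i.isLt; omega⟩ with hw'
  have hw0 : ∀ i : Fin (k+2), i.val = 0 → w' i = t i₁ := by
    intro i hi
    simp only [hw', hi, if_pos]
  have hw1 : ∀ i : Fin (k+2), i.val = 1 → w' i = t i₂ := by
    intro i hi
    simp only [hw', hi]
    norm_num
  have hw2 : ∀ (i : Fin (k+2)) (h2 : 2 ≤ i.val),
      w' i = w ⟨i.val - 1, by have := i.isLt; omega⟩ := by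
    intro i hi
    have h0 : ¬ (i.val = 0) := by omega
    have h1 : ¬ (i.val = 1) := by omega
    simp only [hw', h0, h1, if_neg, if_false]
  -- non-connection between a new point and an old point
  have hmix : ∀ (ℓ : Fin 3), ¬ P ℓ → ∀ j : Fin (k+1), j ≠ 0 → ¬ Avoid G B' (t ℓ) (w j) := by
    intro ℓ hPℓ j hj hav
    have h1 : Avoid G B (t ℓ) (w j) := hav.mono Set.subset_union_left
    have h2 : Avoid G B y (w j) := (Avoid.symm' (htD ℓ hPℓ)).trans' h1
    exact hwd 0 j (Ne.symm hj) ((Avoid.symm' hyC).trans' h2)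
  refine ⟨B', hB'bdd, w', ?_, ?_⟩
  · intro i
    by_cases h0 : i.val = 0
    · rw [hw0 i h0]
      intro hbdd
      exact htu i₁ (bdd_subset hbdd (hnew i₁ hPi₁))
    · by_cases h1 : i.val = 1
      · rw [hw1 i h1]
        intro hbdd
        exact htu i₂ (bdd_subset hbdd (hnew i₂ hPi₂))
      · have h2 : 2 ≤ i.val := by omega
        rw [hw2 i h2]
        intro hbdd
        refine hwu _ (bdd_subset hbdd (hold ⟨i.val - 1, by have := i.isLt; omega⟩ ?_))
        intro hcon
        have := congrArg Fin.val hcon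
        simp only [Fin.val_zero] at this
        omega
  · -- pairwise distinctness
    have hsym : ∀ i j : Fin (k+2), i.val < j.val → ¬ Avoid G B' (w' i) (w' j) := by
      intro i j hij hav
      by_cases h0 : i.val = 0
      · rw [hw0 i h0] at hav
        by_cases j1 : j.val = 1
        · rw [hw1 j j1] at hav
          exact htd i₁ i₂ hi12 (hav.mono Set.subset_union_right)
        · have j2 : 2 ≤ j.val := by omega
          rw [hw2 j j2] at hav
          refine hmix i₁ hPi₁ _ ?_ hav
          intro hcon
          have := congrArg Fin.val hcon
          simp only [Fin.val_zero] at this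
          omega
      · by_cases h1 : i.val = 1
        · rw [hw1 i h1] at hav
          have j2 : 2 ≤ j.val := by omega
          rw [hw2 j j2] at hav
          refine hmix i₂ hPi₂ _ ?_ hav
          intro hcon
          have := congrArg Fin.val hcon
          simp only [Fin.val_zero] at this
          omega
        · have i2 : 2 ≤ i.val := by omega
          have j2 : 2 ≤ j.val := by omega
          rw [hw2 i i2, hw2 j j2] at hav
          refine hwd _ _ ?_ (hav.mono Set.subset_union_left)
          intro hcon
          have := congrArg Fin.val hcon
          simp only at this
          omega
    intro i j hij hav
    rcases lt_trichotomy i.val j.val with h | h | h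
    · exact hsym i j h hav
    · exact hij (Fin.ext h)
    · exact hsym j i h (Avoid.symm' hav)

/-- Iterating the splitting step. -/
lemma many (hc : G.Connected) {κ : ℕ} (hκ : 1 ≤ κ)
    (hctp : ∀ x y : V, ∃ (f : V → V) (c : ℕ), f x = y ∧
      (∀ a b, G.dist (f a) (f b) ≤ κ * G.dist a b + κ) ∧
      (∀ a b, G.dist a b ≤ κ * G.dist (f a) (f b) + κ * κ) ∧
      (∀ v, ∃ w, G.dist v (f w) ≤ c))
    {B₀ : Set V} {x₀ : V} {s : ℕ} (hB₀bdd : BddSet G B₀) (hB₀s : ∀ u ∈ B₀, G.dist x₀ u ≤ s)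
    {v3 : Fin 3 → V} (hv3u : ∀ i, ¬ BddSet G (CompOf G B₀ (v3 i)))
    (hv3d : ∀ i j : Fin 3, i ≠ j → ¬ Avoid G B₀ (v3 i) (v3 j)) :
    ∀ n : ℕ, ∃ B : Set V, BddSet G B ∧ ∃ w : Fin (n+3) → V,
      (∀ i, ¬ BddSet G (CompOf G B (w i))) ∧
      (∀ i j : Fin (n+3), i ≠ j → ¬ Avoid G B (w i) (w j)) := by
  intro n
  induction n with
  | zero => exact ⟨B₀, hB₀bdd, v3, hv3u, hv3d⟩
  | succ n ih =>
    obtain ⟨B, hB, w, hwu, hwd⟩ := ih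
    obtain ⟨B', hB', w', hw'u, hw'd⟩ :=
      step (k := n + 2) hc hκ hctp hB₀s hv3u hv3d hB hwu hwd
    exact ⟨B', hB', w', hw'u, hw'd⟩

/-- The first part of Statement 7. -/
lemma part1 (hc : G.Connected) (hct : CoarselyTransitive G)
    (h3 : ∃ B₀ : Set V, BddSet G B₀ ∧ 3 ≤ Cardinal.mk ↥(unbddComps G B₀)) :
    ∀ M : ℕ, ∃ B : Set V, BddSet G B ∧ (M : Cardinal) < Cardinal.mk ↥(unbddComps G B) := by
  classical
  obtain ⟨κ, hκ, hctp⟩ := ct_package hct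
  obtain ⟨B₀, hB₀bdd, hB₀3⟩ := h3
  -- extract three distinct unbounded components
  have hne : Nonempty ↥(unbddComps G B₀) := by
    by_contra hcon
    rw [not_nonempty_iff] at hcon
    have h0 : Cardinal.mk ↥(unbddComps G B₀) = 0 := Cardinal.mk_eq_zero _
    rw [h0] at hB₀3
    norm_num at hB₀3
  obtain ⟨X⟩ := hne
  obtain ⟨Y, hYX⟩ := (Cardinal.two_le_iff' X).mp (le_trans (by norm_num) hB₀3)
  obtain ⟨Z, hZX, hZY⟩ := Cardinal.three_le hB₀3 X Y
  set e : Fin 3 → ↥(unbddComps G B₀) := ![X, Y, Z] with he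
  have einj : Function.Injective e := by
    intro i j hij
    fin_cases i <;> fin_cases j <;> simp_all [he] <;>
      first
        | rfl
        | exact absurd hij.symm hYX
        | exact absurd hij.symm hZX
        | exact absurd hij.symm hZY
        | exact absurd hij hYX
        | exact absurd hij hZX
        | exact absurd hij hZY
  have hrep : ∀ i : Fin 3, ∃ v : ↥((B₀ᶜ : Set V)),
      (G.induce (B₀ᶜ : Set V)).connectedComponentMk v = (e i).1 :=
    fun i => ((e i).1).exists_rep
  choose vv hvv using hrep
  set v3 : Fin 3 → V := fun i => (vv i).1 with hv3
  have hv3c : ∀ i, v3 i ∈ ((B₀ᶜ : Set V)) := fun i => (vv i).2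
  have hcompeq : ∀ i, compVerts G B₀ ((e i).1) = CompOf G B₀ (v3 i) := by
    intro i
    rw [← hvv i]
    exact compVerts_eq (vv i).2
  have hv3u : ∀ i, ¬ BddSet G (CompOf G B₀ (v3 i)) := by
    intro i
    rw [← hcompeq i]
    exact (e i).2
  have hv3d : ∀ i j : Fin 3, i ≠ j → ¬ Avoid G B₀ (v3 i) (v3 j) := by
    intro i j hij hav
    have h1 : (G.induce (B₀ᶜ : Set V)).Reachable ⟨v3 i, hv3c i⟩ ⟨v3 j, hv3c j⟩ :=
      reachable_of_avoid hav (hv3c i) (hv3c j)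
    have h2 : (e i).1 = (e j).1 := by
      rw [← hvv i, ← hvv j]
      have : (⟨v3 i, hv3c i⟩ : ↥((B₀ᶜ : Set V))) = vv i := rfl
      exact SimpleGraph.ConnectedComponent.eq.mpr h1
    exact hij (einj (Subtype.ext h2))
  -- the anchor
  have hx₀ : ∃ x₀ : V, True := ⟨hc.nonempty.some, trivial⟩
  obtain ⟨x₀, -⟩ := hx₀
  obtain ⟨s, hB₀s⟩ := (bdd_iff hc x₀).mp hB₀bdd
  intro M
  obtain ⟨B, hB, w, hwu, hwd⟩ := many hc hκ hctp hB₀bdd hB₀s hv3u hv3d M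
  -- build the injection into the unbounded components of B
  have hwB : ∀ i, w i ∉ B := fun i => not_mem_of_unbdd_compOf (hwu i)
  have hwBc : ∀ i, w i ∈ ((Bᶜ : Set V)) := fun i => hwB i
  set g : Fin (M+3) → ↥(unbddComps G B) := fun i =>
    ⟨(G.induce (Bᶜ : Set V)).connectedComponentMk ⟨w i, hwBc i⟩, by
      show ¬ BddSet G (compVerts G B _)
      rw [compVerts_eq (hwBc i)]
      exact hwu i⟩ with hg
  have hginj : Function.Injective g := by
    intro i j hij
    by_contra hne
    have h1 : (G.induce (Bᶜ : Set V)).connectedComponentMk ⟨w i, hwBc i⟩ =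
        (G.induce (Bᶜ : Set V)).connectedComponentMk ⟨w j, hwBc j⟩ := by
      have := congrArg Subtype.val hij
      exact this
    have h2 := SimpleGraph.ConnectedComponent.eq.mp h1
    exact hwd i j hne (avoid_of_reachable h2)
  refine ⟨B, hB, ?_⟩
  have hginj2 : Function.Injective (g ∘ (ULift.down : ULift (Fin (M+3)) → Fin (M+3))) :=
    hginj.comp (fun a b hab => ULift.ext _ _ hab)
  calc (M : Cardinal) < ((M + 3 : ℕ) : Cardinal) := by exact_mod_cast (by omega : M < M + 3)
    _ = Cardinal.mk (ULift (Fin (M+3))) := by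
        rw [Cardinal.mk_uLift, Cardinal.mk_fin, Cardinal.lift_natCast]
    _ ≤ Cardinal.mk ↥(unbddComps G B) := Cardinal.mk_le_of_injective hginj2

end Beta

end Stmt7Aux

/-- in a connected coarsely transitive graph, if some bounded vertex set has
at least three unbounded complementary components, then for each `M` there is a bounded
vertex set with more than `M` unbounded complementary components. Consequently, a
coarsely transitive graph has either zero, one, two, or infinitely many ends: either
every bounded set has at most two unbounded complementary components, or the number of
unbounded complementary components of bounded sets is unbounded. -/
theorem stmt7 {V : Type*} (G : SimpleGraph V) (hconn : G.Connected)
    (hct : CoarselyTransitive G) :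
    ((∃ B₀ : Set V, BddSet G B₀ ∧ 3 ≤ Cardinal.mk ↥(unbddComps G B₀)) →
      ∀ M : ℕ, ∃ B : Set V, BddSet G B ∧ (M : Cardinal) < Cardinal.mk ↥(unbddComps G B)) ∧
    ((∀ B : Set V, BddSet G B → Cardinal.mk ↥(unbddComps G B) ≤ 2) ∨
      (∀ M : ℕ, ∃ B : Set V, BddSet G B ∧ (M : Cardinal) < Cardinal.mk ↥(unbddComps G B))) := by

  have hp1 := Stmt7Aux.part1 (G := G) hconn hct
  refine ⟨hp1, ?_⟩
  by_cases hall : ∀ B : Set V, BddSet G B → Cardinal.mk ↥(unbddComps G B) ≤ 2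
  · exact Or.inl hall
  · right
    push_neg at hall
    obtain ⟨B, hB, h2⟩ := hall
    refine hp1 ⟨B, hB, ?_⟩
    calc (3:Cardinal) = 2 + 1 := by norm_num
      _ ≤ Order.succ 2 := Cardinal.add_one_le_succ 2
      _ ≤ Cardinal.mk ↥(unbddComps G B) := Order.succ_le_of_lt h2
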